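/- Theorem 4.1 (optimality of the service-time optimization algorithm): assume p_i ≥ 0 and d_max,i ≥ 0 for all i, ŝ(0)_i ≤ s⁺_i for all i ∈ {0,…,l−1}, and ŝ(0)_{l−1} + t_{l−1} ≤ T. Then the pair (s*, d*) returned by Algorithm STO is feasible for the service-time LP and is optimal: p·d* ≥ p·d for every feasible pair (s, d). -/

import Mathlib

def Feasible (l : ℕ) (T : ℝ) (t dmax smin smax s d : ℕ → ℝ) : Prop :=
  (∀ i < l, smin i ≤ s i ∧ s i ≤ smax i) ∧
  (∀ i < l, 0 ≤ d i ∧ d i ≤ dmax i) ∧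
  (∀ i < l, s i + d i + t i ≤ (if i + 1 = l then T else s (i + 1)))

def sHat (t smin d : ℕ → ℝ) : ℕ → ℝ
  | 0 => smin 0
  | i + 1 => max (sHat t smin d i + d i + t i) (smin (i + 1))

def stoStep (l : ℕ) (T : ℝ) (t dmax smin smax : ℕ → ℝ) (d : ℕ → ℝ) (a : ℕ) : ℕ → ℝ :=
  if h : a < l then
    Function.update d a (min (dmax a)
      ((Finset.Icc (a + 1) l).inf' (Finset.nonempty_Icc.mpr (by omega))
        fun j => (if j = l then T else smax j) - sHat t smin d a
          - ∑ m ∈ Finset.Ico a j, ((if m = a then 0 else d m) + t m)))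
  else d

def stoD (l : ℕ) (T : ℝ) (t dmax smin smax : ℕ → ℝ) (order : List ℕ) : ℕ → ℝ :=
  order.foldl (stoStep l T t dmax smin smax) fun _ => 0

namespace STO

/-- sum of service + travel times over `[k, j)` -/
def S (t d : ℕ → ℝ) (k j : ℕ) : ℝ := ∑ m ∈ Finset.Ico k j, (d m + t m)

/-- `smax` extended with the convention `smax_l = T` -/
def smax' (l : ℕ) (T : ℝ) (smax : ℕ → ℝ) (j : ℕ) : ℝ := if j = l then T else smax j

/-- feasibility expressed purely in terms of service times -/
def feasD (l : ℕ) (T : ℝ) (t dmax smin smax : ℕ → ℝ) (d : ℕ → ℝ) : Prop :=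
  (∀ i < l, 0 ≤ d i ∧ d i ≤ dmax i) ∧
  ∀ k j, k < l → k ≤ j → j ≤ l → smin k + S t d k j ≤ smax' l T smax j

theorem S_split (t d : ℕ → ℝ) {x y z : ℕ} (h1 : x ≤ y) (h2 : y ≤ z) :
    S t d x z = S t d x y + S t d y z := by
  rw [S, S, S, Finset.sum_Ico_consecutive _ h1 h2]

theorem S_succ (t d : ℕ → ℝ) {x y : ℕ} (h1 : x ≤ y) :
    S t d x (y + 1) = S t d x y + (d y + t y) := by
  rw [S_split t d h1 (Nat.le_succ y)]
  congr 1
  simp [S, Finset.sum_Ico_succ_top le_rfl]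

theorem S_self (t d : ℕ → ℝ) (x : ℕ) : S t d x x = 0 := by
  simp [S]

theorem S_update_mem (t d : ℕ → ℝ) {a k j : ℕ} (x : ℝ) (h1 : k ≤ a) (h2 : a < j) :
    S t (Function.update d a x) k j = S t d k j + (x - d a) := by
  have ha : a ∈ Finset.Ico k j := Finset.mem_Ico.mpr ⟨h1, h2⟩
  have key : ∀ m, Function.update d a x m + t m =
      Function.update (fun m => d m + t m) a (x + t a) m := by
    intro m
    rcases eq_or_ne m a with rfl | hm
    · simp
    · simp [Function.update_of_ne hm]
  have key0 : ∀ m, d m + t m = Function.update (fun m => d m + t m) a (d a + t a) m := by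
    intro m
    rcases eq_or_ne m a with rfl | hm
    · simp
    · simp [Function.update_of_ne hm]
  rw [S, Finset.sum_congr rfl (fun m _ => key m), Finset.sum_update_of_mem ha]
  have h3 : ∑ m ∈ Finset.Ico k j \ {a}, Function.update (fun m => d m + t m) a (x + t a) m
      = ∑ m ∈ Finset.Ico k j \ {a}, (d m + t m) := by
    refine Finset.sum_congr rfl fun m hm => ?_
    rw [Finset.mem_sdiff, Finset.mem_singleton] at hm
    exact Function.update_of_ne hm.2 _ _
  have h4 : S t d k j = (d a + t a) + ∑ m ∈ Finset.Ico k j \ {a}, (d m + t m) :=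
    Finset.sum_eq_add_sum_sdiff_singleton_of_mem ha _
  rw [h4]
  ring

theorem S_update_not_mem (t d : ℕ → ℝ) {a k j : ℕ} (x : ℝ) (h : ¬ (k ≤ a ∧ a < j)) :
    S t (Function.update d a x) k j = S t d k j := by
  refine Finset.sum_congr rfl fun m hm => ?_
  rw [Finset.mem_Ico] at hm
  have : m ≠ a := by rintro rfl; exact h ⟨hm.1, hm.2⟩
  rw [Function.update_of_ne this]

theorem sum_mul_update (p d : ℕ → ℝ) {l a : ℕ} (x : ℝ) (ha : a < l) :
    ∑ i ∈ Finset.range l, p i * Function.update d a x i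
      = (∑ i ∈ Finset.range l, p i * d i) + p a * (x - d a) := by
  have ha' : a ∈ Finset.range l := Finset.mem_range.mpr ha
  have key : ∀ m, p m * Function.update d a x m =
      Function.update (fun m => p m * d m) a (p a * x) m := by
    intro m
    rcases eq_or_ne m a with rfl | hm
    · simp
    · simp [Function.update_of_ne hm]
  have key0 : ∀ m, p m * d m = Function.update (fun m => p m * d m) a (p a * d a) m := by
    intro m
    rcases eq_or_ne m a with rfl | hm
    · simp
    · simp [Function.update_of_ne hm]
  rw [Finset.sum_congr rfl (fun m _ => key m), Finset.sum_update_of_mem ha']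
  have h4 : ∑ i ∈ Finset.range l, p i * d i
      = (p a * d a) + ∑ m ∈ Finset.range l \ {a}, (p m * d m) :=
    Finset.sum_eq_add_sum_sdiff_singleton_of_mem ha' _
  rw [h4]
  ring

theorem sHat_ge (t smin d : ℕ → ℝ) : ∀ i k, k ≤ i → smin k + S t d k i ≤ sHat t smin d i := by
  intro i
  induction i with
  | zero => intro k hk; interval_cases k; simp [sHat, S_self]
  | succ n ih =>
    intro k hk
    rcases eq_or_lt_of_le hk with rfl | hk'
    · simp [sHat, S_self]
    · have hk2 : k ≤ n := by omega
      have := ih k hk2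
      calc smin k + S t d k (n+1) = (smin k + S t d k n) + (d n + t n) := by
            rw [S_succ t d hk2]; ring
        _ ≤ sHat t smin d n + d n + t n := by linarith
        _ ≤ sHat t smin d (n+1) := le_max_left _ _

theorem sHat_achieved (t smin d : ℕ → ℝ) :
    ∀ i, ∃ k, k ≤ i ∧ sHat t smin d i = smin k + S t d k i := by
  intro i
  induction i with
  | zero => exact ⟨0, le_rfl, by simp [sHat, S_self]⟩
  | succ n ih =>
    obtain ⟨k, hk, hek⟩ := ih
    rcases max_cases (sHat t smin d n + d n + t n) (smin (n+1)) with ⟨h1, _⟩ | ⟨h1, _⟩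
    · refine ⟨k, by omega, ?_⟩
      show max _ _ = _
      rw [h1, hek, S_succ t d hk]; ring
    · exact ⟨n+1, le_rfl, by show max _ _ = _; rw [h1, S_self]; ring⟩

end STO
namespace STO

theorem zero_feasD (l : ℕ) (hl : 1 ≤ l) (T : ℝ) (t dmax smin smax : ℕ → ℝ)
    (hdmax : ∀ i < l, 0 ≤ dmax i)
    (hwin : ∀ i < l, sHat t smin (fun _ => 0) i ≤ smax i)
    (hT : sHat t smin (fun _ => 0) (l - 1) + t (l - 1) ≤ T) :
    feasD l T t dmax smin smax (fun _ => 0) := by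
  constructor
  · intro i hi; exact ⟨le_rfl, hdmax i hi⟩
  · intro k j hk hkj hjl
    rcases eq_or_lt_of_le hjl with rfl | hj
    · obtain ⟨j', rfl⟩ : ∃ j', j = j' + 1 := ⟨j - 1, by omega⟩
      have hk1 : k ≤ j' := by omega
      have h1 : smin k + S t (fun _ => 0) k j' ≤ sHat t smin (fun _ => 0) j' :=
        sHat_ge t smin _ _ _ hk1
      have h2 : S t (fun _ => 0) k (j'+1) = S t (fun _ => 0) k j' + ((0:ℝ) + t j') :=
        S_succ t _ hk1
      rw [smax', if_pos rfl, h2]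
      simp only [Nat.add_sub_cancel] at hT
      linarith
    · have h1 : smin k + S t (fun _ => 0) k j ≤ sHat t smin (fun _ => 0) j :=
        sHat_ge t smin _ _ _ hkj
      rw [smax', if_neg (by omega)]
      exact h1.trans (hwin j hj)

theorem feas_to_feasD (l : ℕ) (T : ℝ) (t dmax smin smax s d : ℕ → ℝ)
    (h : Feasible l T t dmax smin smax s d) : feasD l T t dmax smin smax d := by
  obtain ⟨hwin, hbnd, hchain⟩ := h
  refine ⟨hbnd, ?_⟩
  have key : ∀ j k, k < l → k ≤ j → j ≤ l →
      s k + S t d k j ≤ (if j = l then T else s j) := by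
    intro j
    induction j with
    | zero => intro k hk hkj hjl
              interval_cases k
              rw [S_self, if_neg (by omega)]; simp
    | succ n ih =>
      intro k hk hkj hjl
      rcases eq_or_lt_of_le hkj with rfl | hkj'
      · rw [S_self, if_neg (by omega)]; simp
      · have hkn : k ≤ n := by omega
        have hnl : n < l := by omega
        have h1 := ih k hk hkn (by omega)
        rw [if_neg (by omega)] at h1
        have h2 := hchain n hnl
        have h3 : S t d k (n+1) = S t d k n + (d n + t n) := S_succ t d hkn
        rw [h3]
        linarith
  intro k j hk hkj hjl
  have h1 := key j k hk hkj hjl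
  have h2 := (hwin k hk).1
  rcases eq_or_lt_of_le hjl with rfl | hj
  · rw [if_pos rfl] at h1; rw [smax', if_pos rfl]; linarith
  · rw [if_neg (by omega)] at h1
    have h3 := (hwin j hj).2
    rw [smax', if_neg (by omega)]; linarith

theorem feasD_to_feas (l : ℕ) (T : ℝ) (t dmax smin smax d : ℕ → ℝ)
    (h : feasD l T t dmax smin smax d) :
    Feasible l T t dmax smin smax (sHat t smin d) d := by
  obtain ⟨hbnd, hint⟩ := h
  refine ⟨?_, hbnd, ?_⟩
  · intro i hi
    constructor
    · have := sHat_ge t smin d i i le_rfl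
      rw [S_self] at this; linarith
    · obtain ⟨k, hk, hek⟩ := sHat_achieved t smin d i
      have := hint k i (by omega) hk (by omega)
      rw [smax', if_neg (by omega)] at this
      linarith
  · intro i hi
    rcases eq_or_ne (i+1) l with he | hne
    · rw [if_pos he]
      obtain ⟨k, hk, hek⟩ := sHat_achieved t smin d i
      have h1 := hint k (i+1) (by omega) (by omega) (by omega)
      rw [smax', if_pos he, S_succ t d hk] at h1
      linarith
    · rw [if_neg hne]
      exact (le_max_left _ _).trans_eq rfl

/-- the crossing lemma: intersection of two tight crossing intervals is tight -/
theorem cross (l : ℕ) (T : ℝ) (t dmax smin smax d : ℕ → ℝ)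
    (h : feasD l T t dmax smin smax d) {k1 k2 j1 j2 : ℕ}
    (hk : k2 ≤ k1) (hkj : k1 ≤ j2) (hj : j2 ≤ j1) (hjl : j1 ≤ l) (hkl : k1 < l)
    (t1 : smin k1 + S t d k1 j1 = smax' l T smax j1)
    (t2 : smin k2 + S t d k2 j2 = smax' l T smax j2) :
    smin k1 + S t d k1 j2 = smax' l T smax j2 := by
  have e1 : S t d k2 j1 = S t d k2 j2 + S t d j2 j1 := S_split t d (hk.trans hkj) hj
  have e2 : S t d k1 j1 = S t d k1 j2 + S t d j2 j1 := S_split t d hkj hj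
  have f1 := h.2 k2 j1 (by omega) (by omega) hjl
  have f2 := h.2 k1 j2 hkl hkj (hj.trans hjl)
  -- from f1 and t1: smin k2 + S k2 j2 + S j2 j1 ≤ smin k1 + S k1 j1
  have : smax' l T smax j2 ≤ smin k1 + S t d k1 j2 := by
    have := f1
    rw [e1, ← t1, e2] at this
    linarith [t2]
  linarith

end STO
namespace STO

/-- the value Algorithm STO assigns at position `a` -/
noncomputable def delta (l : ℕ) (T : ℝ) (t dmax smin smax d : ℕ → ℝ) (a : ℕ) (ha : a < l) : ℝ :=
  min (dmax a)
    ((Finset.Icc (a + 1) l).inf' (Finset.nonempty_Icc.mpr (by omega))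
      fun j => (if j = l then T else smax j) - sHat t smin d a
        - ∑ m ∈ Finset.Ico a j, ((if m = a then 0 else d m) + t m))

theorem stoStep_eq (l : ℕ) (T : ℝ) (t dmax smin smax d : ℕ → ℝ) (a : ℕ) (ha : a < l) :
    stoStep l T t dmax smin smax d a =
      Function.update d a (delta l T t dmax smin smax d a ha) := by
  rw [stoStep, dif_pos ha]; rfl

/-- the inner sum in delta equals `S` minus the `d a` term -/
theorem delta_sum_eq (t d : ℕ → ℝ) {a j : ℕ} (h : a < j) :
    ∑ m ∈ Finset.Ico a j, ((if m = a then 0 else d m) + t m) = S t d a j - d a := by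
  rw [S]
  have ha : a ∈ Finset.Ico a j := Finset.mem_Ico.mpr ⟨le_rfl, h⟩
  rw [Finset.sum_eq_add_sum_sdiff_singleton_of_mem ha (fun m => (if m = a then 0 else d m) + t m),
    Finset.sum_eq_add_sum_sdiff_singleton_of_mem ha (fun m => d m + t m), if_pos rfl]
  have : ∑ m ∈ Finset.Ico a j \ {a}, ((if m = a then 0 else d m) + t m)
      = ∑ m ∈ Finset.Ico a j \ {a}, (d m + t m) := by
    refine Finset.sum_congr rfl fun m hm => ?_
    rw [Finset.mem_sdiff, Finset.mem_singleton] at hm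
    rw [if_neg hm.2]
  rw [this]; ring

theorem delta_le (l : ℕ) (T : ℝ) (t dmax smin smax d : ℕ → ℝ) (a : ℕ) (ha : a < l)
    {j : ℕ} (hj1 : a < j) (hj2 : j ≤ l) :
    delta l T t dmax smin smax d a ha ≤ smax' l T smax j - sHat t smin d a - (S t d a j - d a) := by
  have hm : j ∈ Finset.Icc (a+1) l := Finset.mem_Icc.mpr ⟨by omega, hj2⟩
  have := min_le_right (dmax a)
    ((Finset.Icc (a + 1) l).inf' (Finset.nonempty_Icc.mpr (by omega))
      fun j => (if j = l then T else smax j) - sHat t smin d a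
        - ∑ m ∈ Finset.Ico a j, ((if m = a then 0 else d m) + t m))
  refine le_trans (le_trans this (Finset.inf'_le _ hm)) ?_
  rw [delta_sum_eq t d hj1, smax']

theorem delta_le_dmax (l : ℕ) (T : ℝ) (t dmax smin smax d : ℕ → ℝ) (a : ℕ) (ha : a < l) :
    delta l T t dmax smin smax d a ha ≤ dmax a := min_le_left _ _

/-- feasibility of the greedy step, assuming the current value at `a` is `0` -/
theorem step_feasD (l : ℕ) (T : ℝ) (t dmax smin smax d : ℕ → ℝ) (a : ℕ) (ha : a < l)
    (hd : feasD l T t dmax smin smax d) (ha0 : d a = 0)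
    (hdmax : ∀ i < l, 0 ≤ dmax i) :
    0 ≤ delta l T t dmax smin smax d a ha ∧
      feasD l T t dmax smin smax
        (Function.update d a (delta l T t dmax smin smax d a ha)) := by
  set δ := delta l T t dmax smin smax d a ha with hδ
  have hpos : 0 ≤ δ := by
    rw [hδ, delta]
    refine le_min (hdmax a ha) (Finset.le_inf' _ _ fun j hj => ?_)
    rw [Finset.mem_Icc] at hj
    have haj : a < j := by omega
    rw [delta_sum_eq t d haj]
    obtain ⟨k, hk, hek⟩ := sHat_achieved t smin d a
    have hc := hd.2 k j (by omega) (by omega) hj.2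
    rw [S_split t d hk haj.le] at hc
    rw [hek, ha0]
    simp only [smax'] at hc ⊢
    linarith
  refine ⟨hpos, ⟨?_, ?_⟩⟩
  · intro i hi
    rcases eq_or_ne i a with rfl | hne
    · rw [Function.update_self]
      exact ⟨hpos, delta_le_dmax l T t dmax smin smax d i ha⟩
    · rw [Function.update_of_ne hne]; exact hd.1 i hi
  · intro k j hk hkj hjl
    by_cases hmem : k ≤ a ∧ a < j
    · rw [S_update_mem t d δ hmem.1 hmem.2, ha0, sub_zero]
      have h1 : smin k + S t d k a ≤ sHat t smin d a := sHat_ge t smin d a k hmem.1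
      have h2 := delta_le l T t dmax smin smax d a ha hmem.2 hjl
      rw [ha0, sub_zero] at h2
      have h3 : S t d k j = S t d k a + S t d a j := S_split t d hmem.1 hmem.2.le
      rw [h3]
      have := hδ ▸ h2
      linarith
    · rw [S_update_not_mem t d δ hmem]
      exact hd.2 k j hk hkj hjl

/-- maximality of delta: any feasible `e` dominating `d` off `a` has `e a ≤ δ` -/
theorem delta_max (l : ℕ) (T : ℝ) (t dmax smin smax d e : ℕ → ℝ) (a : ℕ) (ha : a < l)
    (he : feasD l T t dmax smin smax e)
    (hde : ∀ m < l, m ≠ a → d m ≤ e m) :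
    e a ≤ delta l T t dmax smin smax d a ha := by
  rw [delta]
  refine le_min (he.1 a ha).2 (Finset.le_inf' _ _ fun j hj => ?_)
  rw [Finset.mem_Icc] at hj
  have haj : a < j := by omega
  rw [delta_sum_eq t d haj]
  obtain ⟨k, hk, hek⟩ := sHat_achieved t smin d a
  have hc := he.2 k j (by omega) (by omega) hj.2
  rw [S_split t e hk haj.le] at hc
  have hmono1 : S t d k a ≤ S t e k a := by
    refine Finset.sum_le_sum fun m hm => ?_
    rw [Finset.mem_Ico] at hm
    have := hde m (by omega) (by omega)
    linarith
  have hmono2 : S t d a j - d a ≤ S t e a j - e a := by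
    have e1 : S t d a j = (d a + t a) + S t d (a+1) j := by
      rw [S_split t d (Nat.le_succ a) haj]
      simp [S, Finset.sum_Ico_succ_top le_rfl]
    have e2 : S t e a j = (e a + t a) + S t e (a+1) j := by
      rw [S_split t e (Nat.le_succ a) haj]
      simp [S, Finset.sum_Ico_succ_top le_rfl]
    have hmono3 : S t d (a+1) j ≤ S t e (a+1) j := by
      refine Finset.sum_le_sum fun m hm => ?_
      rw [Finset.mem_Ico] at hm
      have := hde m (by omega) (by omega)
      linarith
    rw [e1, e2]; linarith
  rw [hek]
  simp only [smax'] at *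
  linarith

end STO
namespace STO

/-- the collection of (index pairs describing) intervals containing `a` -/
def Rset (l a : ℕ) : Finset (ℕ × ℕ) := Finset.Icc 0 a ×ˢ Finset.Icc (a+1) l

theorem Rset_mem {l a : ℕ} {kj : ℕ × ℕ} :
    kj ∈ Rset l a ↔ kj.1 ≤ a ∧ a + 1 ≤ kj.2 ∧ kj.2 ≤ l := by
  simp [Rset, Finset.mem_product, Finset.mem_Icc, and_assoc]

theorem Rset_nonempty {l a : ℕ} (ha : a < l) : (Rset l a).Nonempty :=
  ⟨(a, a+1), Rset_mem.mpr ⟨le_rfl, le_rfl, ha⟩⟩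

open Classical in
/-- number of intervals containing `a` that are not tight -/
noncomputable def slackCnt (l : ℕ) (T : ℝ) (t smin smax : ℕ → ℝ) (a : ℕ) (d : ℕ → ℝ) : ℕ :=
  ((Rset l a).filter (fun kj => smin kj.1 + S t d kj.1 kj.2 < smax' l T smax kj.2)).card

open Classical in
/-- number of unfinished coordinates with nonzero service time -/
noncomputable def suppCnt (l : ℕ) (P : ℕ → Prop) (d : ℕ → ℝ) : ℕ :=
  ((Finset.range l).filter (fun m => P m ∧ d m ≠ 0)).card

noncomputable def Nmeas (l : ℕ) (T : ℝ) (t smin smax : ℕ → ℝ) (P : ℕ → Prop)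
    (a : ℕ) (d : ℕ → ℝ) : ℕ :=
  suppCnt l P d * (l * l + 1) + slackCnt l T t smin smax a d

theorem slackCnt_le (l : ℕ) (T : ℝ) (t smin smax : ℕ → ℝ) (a : ℕ) (d : ℕ → ℝ)
    (ha : a < l) : slackCnt l T t smin smax a d ≤ l * l := by
  classical
  refine le_trans (Finset.card_filter_le _ _) ?_
  rw [Rset, Finset.card_product, Nat.card_Icc, Nat.card_Icc]
  have h1 : a + 1 - 0 ≤ l := by omega
  have h2 : l + 1 - (a + 1) ≤ l := by omega
  calc (a + 1 - 0) * (l + 1 - (a+1)) ≤ l * l := Nat.mul_le_mul h1 h2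

end STO
namespace STO

open Classical in
theorem card_filter_lt_card_filter {α : Type*} (s : Finset α) (p q : α → Prop)
    (h : ∀ x ∈ s, q x → p x) (x0 : α) (hx0 : x0 ∈ s) (hp : p x0) (hq : ¬ q x0) :
    (s.filter q).card < (s.filter p).card := by
  apply Finset.card_lt_card
  rw [Finset.ssubset_iff_of_subset]
  · exact ⟨x0, Finset.mem_filter.mpr ⟨hx0, hp⟩, fun hc => hq (Finset.mem_filter.mp hc).2⟩
  · intro x hx
    rw [Finset.mem_filter] at hx ⊢
    exact ⟨hx.1, h x hx.1 hx.2⟩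

open Classical in
theorem card_filter_le_card_filter {α : Type*} (s : Finset α) (p q : α → Prop)
    (h : ∀ x ∈ s, q x → p x) :
    (s.filter q).card ≤ (s.filter p).card := by
  apply Finset.card_le_card
  intro x hx
  rw [Finset.mem_filter] at hx ⊢
  exact ⟨hx.1, h x hx.1 hx.2⟩

theorem slackCnt_lt (l : ℕ) (T : ℝ) (t smin smax : ℕ → ℝ) (a : ℕ) (d1 d2 : ℕ → ℝ)
    (h : ∀ kj ∈ Rset l a, smin kj.1 + S t d2 kj.1 kj.2 < smax' l T smax kj.2 →
      smin kj.1 + S t d1 kj.1 kj.2 < smax' l T smax kj.2)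
    (q : ℕ × ℕ) (hq : q ∈ Rset l a)
    (h1 : smin q.1 + S t d1 q.1 q.2 < smax' l T smax q.2)
    (h2 : ¬ (smin q.1 + S t d2 q.1 q.2 < smax' l T smax q.2)) :
    slackCnt l T t smin smax a d2 < slackCnt l T t smin smax a d1 := by
  classical
  unfold slackCnt
  convert card_filter_lt_card_filter (Rset l a) _ _ h q hq h1 h2 using 2

theorem slackCnt_le' (l : ℕ) (T : ℝ) (t smin smax : ℕ → ℝ) (a : ℕ) (d1 d2 : ℕ → ℝ)
    (h : ∀ kj ∈ Rset l a, smin kj.1 + S t d2 kj.1 kj.2 < smax' l T smax kj.2 →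
      smin kj.1 + S t d1 kj.1 kj.2 < smax' l T smax kj.2) :
    slackCnt l T t smin smax a d2 ≤ slackCnt l T t smin smax a d1 := by
  classical
  unfold slackCnt
  convert card_filter_le_card_filter (Rset l a) _ _ h using 2

theorem suppCnt_lt (l : ℕ) (P : ℕ → Prop) (d1 d2 : ℕ → ℝ)
    (h : ∀ x < l, P x → d2 x ≠ 0 → d1 x ≠ 0)
    (x0 : ℕ) (hx0 : x0 < l) (hP0 : P x0) (h1 : d1 x0 ≠ 0) (h2 : d2 x0 = 0) :
    suppCnt l P d2 < suppCnt l P d1 := by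
  classical
  unfold suppCnt
  convert card_filter_lt_card_filter (Finset.range l) (fun m => P m ∧ d1 m ≠ 0)
    (fun m => P m ∧ d2 m ≠ 0)
    (fun x hx hq => ⟨hq.1, h x (Finset.mem_range.mp hx) hq.1 hq.2⟩)
    x0 (Finset.mem_range.mpr hx0) ⟨hP0, h1⟩ (fun hc => hc.2 h2) using 2 <;> congr!

theorem suppCnt_le' (l : ℕ) (P : ℕ → Prop) (d1 d2 : ℕ → ℝ)
    (h : ∀ x < l, P x → d2 x ≠ 0 → d1 x ≠ 0) :
    suppCnt l P d2 ≤ suppCnt l P d1 := by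
  classical
  unfold suppCnt
  convert card_filter_le_card_filter (Finset.range l) (fun m => P m ∧ d1 m ≠ 0)
    (fun m => P m ∧ d2 m ≠ 0)
    (fun x hx hq => ⟨hq.1, h x (Finset.mem_range.mp hx) hq.1 hq.2⟩) using 2 <;> congr!

end STO
namespace STO

theorem exchange (l : ℕ) (T : ℝ) (p t dmax smin smax : ℕ → ℝ)
    (hp : ∀ i < l, 0 ≤ p i) (hdmax : ∀ i < l, 0 ≤ dmax i)
    (a : ℕ) (ha : a < l) (g : ℕ → ℝ)
    (hg : feasD l T t dmax smin smax g) (hga : g a = 0)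
    (P : ℕ → Prop)
    (hP : ∀ m, P m → m < l ∧ m ≠ a ∧ g m = 0 ∧ p m ≤ p a) :
    ∀ n, ∀ d' : ℕ → ℝ, Nmeas l T t smin smax P a d' ≤ n →
      feasD l T t dmax smin smax d' →
      (∀ m < l, m ≠ a → ¬ P m → d' m = g m) →
      ∃ d'', feasD l T t dmax smin smax d'' ∧
        d'' a = delta l T t dmax smin smax g a ha ∧
        (∀ m < l, m ≠ a → ¬ P m → d'' m = g m) ∧
        ∑ i ∈ Finset.range l, p i * d' i ≤ ∑ i ∈ Finset.range l, p i * d'' i := by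
  intro n
  induction n using Nat.strong_induction_on with
  | _ n ih =>
  intro d' hN hfeas hagree
  classical
  obtain ⟨hδ0, hupd⟩ := step_feasD l T t dmax smin smax g a ha hg hga hdmax
  set δ := delta l T t dmax smin smax g a ha with hδdef
  have hδdmax : δ ≤ dmax a := delta_le_dmax l T t dmax smin smax g a ha
  have hle : d' a ≤ δ := by
    refine delta_max l T t dmax smin smax g d' a ha hfeas ?_
    intro m hm hma
    by_cases hPm : P m
    · rw [(hP m hPm).2.2.1]; exact (hfeas.1 m hm).1
    · exact le_of_eq (hagree m hm hma hPm).symm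
  rcases eq_or_lt_of_le hle with heq | hlt
  · exact ⟨d', hfeas, heq.symm ▸ rfl, hagree, le_rfl⟩
  have hRne := Rset_nonempty (l := l) (a := a) ha
  set F : ℕ × ℕ → ℝ :=
    fun kj => smax' l T smax kj.2 - (smin kj.1 + S t d' kj.1 kj.2) with hF
  by_cases htight : ∃ kj ∈ Rset l a,
      smax' l T smax kj.2 ≤ smin kj.1 + S t d' kj.1 kj.2
  · -- ===== some tight interval exists =====
    obtain ⟨kj₀, hkj₀R, hkj₀t⟩ := htight
    set TP := (Rset l a).filter
      (fun kj => smax' l T smax kj.2 ≤ smin kj.1 + S t d' kj.1 kj.2) with hTPdef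
    have hTPne : TP.Nonempty := ⟨kj₀, Finset.mem_filter.mpr ⟨hkj₀R, hkj₀t⟩⟩
    have hTPtight : ∀ kj ∈ TP,
        smin kj.1 + S t d' kj.1 kj.2 = smax' l T smax kj.2 := by
      intro kj hkj
      obtain ⟨hR, ht⟩ := Finset.mem_filter.mp hkj
      obtain ⟨h1, h2, h3⟩ := Rset_mem.mp hR
      exact le_antisymm (hfeas.2 _ _ (by omega) (by omega) h3) ht
    obtain ⟨q1, hq1, hq1e⟩ := Finset.exists_mem_eq_sup' hTPne (fun kj => kj.1)
    obtain ⟨q2, hq2, hq2e⟩ := Finset.exists_mem_eq_inf' hTPne (fun kj => kj.2)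
    obtain ⟨hq1a, hq1j, hq1l⟩ := Rset_mem.mp (Finset.mem_filter.mp hq1).1
    obtain ⟨hq2a, hq2j, hq2l⟩ := Rset_mem.mp (Finset.mem_filter.mp hq2).1
    have hk21 : q2.1 ≤ q1.1 := by
      have := Finset.le_sup' (fun kj : ℕ × ℕ => kj.1) hq2
      rwa [← hq1e]
    have hj21 : q2.2 ≤ q1.2 := by
      have := Finset.inf'_le (fun kj : ℕ × ℕ => kj.2) hq1
      rwa [← hq2e]
    have tstar : smin q1.1 + S t d' q1.1 q2.2 = smax' l T smax q2.2 :=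
      cross l T t dmax smin smax d' hfeas hk21 (by omega) hj21 hq1l (by omega)
        (hTPtight q1 hq1) (hTPtight q2 hq2)
    -- find the coordinate m to steal from
    have hSupd : S t (Function.update g a δ) q1.1 q2.2 ≤ S t d' q1.1 q2.2 := by
      have h := hupd.2 q1.1 q2.2 (by omega) (by omega) hq2l
      rw [← tstar] at h
      linarith
    have hSupd2 : S t (Function.update g a δ) q1.1 q2.2 = S t g q1.1 q2.2 + δ := by
      rw [S_update_mem t g δ hq1a (by omega), hga]; ring
    have ha_mem : a ∈ Finset.Ico q1.1 q2.2 := Finset.mem_Ico.mpr ⟨hq1a, by omega⟩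
    have hsum : δ - d' a ≤ ∑ x ∈ (Finset.Ico q1.1 q2.2).erase a, (d' x - g x) := by
      have e1 : ∑ x ∈ Finset.Ico q1.1 q2.2, (d' x - g x)
          = S t d' q1.1 q2.2 - S t g q1.1 q2.2 := by
        rw [S, S, ← Finset.sum_sub_distrib]
        exact Finset.sum_congr rfl fun x _ => by ring
      have e2 : d' a - g a + ∑ x ∈ (Finset.Ico q1.1 q2.2).erase a, (d' x - g x)
          = ∑ x ∈ Finset.Ico q1.1 q2.2, (d' x - g x) :=
        Finset.add_sum_erase (Finset.Ico q1.1 q2.2) (fun x => d' x - g x) ha_mem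
      rw [hga] at e2
      have h5 : δ ≤ S t d' q1.1 q2.2 - S t g q1.1 q2.2 := by linarith
      rw [← e1] at h5
      linarith [e2]
    have hex : ∃ x ∈ (Finset.Ico q1.1 q2.2).erase a, 0 < d' x - g x := by
      by_contra hc
      push_neg at hc
      have : ∑ x ∈ (Finset.Ico q1.1 q2.2).erase a, (d' x - g x) ≤ 0 :=
        Finset.sum_nonpos hc
      linarith
    obtain ⟨m, hmer, hmpos⟩ := hex
    have hma : m ≠ a := Finset.ne_of_mem_erase hmer
    have hmIco := Finset.mem_Ico.mp (Finset.mem_of_mem_erase hmer)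
    have hml : m < l := lt_of_lt_of_le hmIco.2 hq2l
    have hPm : P m := by
      by_contra hc
      rw [hagree m hml hma hc] at hmpos
      linarith
    have hgm : g m = 0 := (hP m hPm).2.2.1
    have hdm : 0 < d' m := by rw [hgm] at hmpos; linarith
    have hpm : p m ≤ p a := (hP m hPm).2.2.2
    have hmtight : ∀ kj ∈ TP, kj.1 ≤ m ∧ m < kj.2 := by
      intro kj hkj
      constructor
      · have := Finset.le_sup' (fun kj : ℕ × ℕ => kj.1) hkj
        rw [hq1e] at this
        exact le_trans this hmIco.1
      · have := Finset.inf'_le (fun kj : ℕ × ℕ => kj.2) hkj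
        rw [hq2e] at this
        exact lt_of_lt_of_le hmIco.2 this
    -- the exchange amount τ
    set G : ℕ × ℕ → ℝ := fun kj => if kj.1 ≤ m ∧ m < kj.2 then d' m else F kj with hG
    set τi := (Rset l a).inf' hRne G with hτidef
    set τ := min (δ - d' a) τi with hτdef
    have hq12R : (q1.1, q2.2) ∈ Rset l a := Rset_mem.mpr ⟨hq1a, hq2j, hq2l⟩
    have hG12 : G (q1.1, q2.2) = d' m := if_pos ⟨hmIco.1, hmIco.2⟩
    have hτledm : τ ≤ d' m := by
      refine le_trans (min_le_right _ _) ?_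
      rw [← hG12]
      exact Finset.inf'_le G hq12R
    have hτpos : 0 < τ := by
      refine lt_min (by linarith) ((Finset.lt_inf'_iff hRne).mpr fun kj hkj => ?_)
      by_cases hm' : kj.1 ≤ m ∧ m < kj.2
      · rw [hG]; simp only [if_pos hm']; exact hdm
      · rw [hG]; simp only [if_neg hm']
        obtain ⟨h1, h2, h3⟩ := Rset_mem.mp hkj
        have hfe := hfeas.2 kj.1 kj.2 (by omega) (by omega) h3
        rcases lt_or_ge (smin kj.1 + S t d' kj.1 kj.2) (smax' l T smax kj.2) with hlt' | hge
        · rw [hF]; simp only; linarith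
        · exfalso
          exact hm' (hmtight kj (Finset.mem_filter.mpr ⟨hkj, hge⟩))
    have hτδ : τ ≤ δ - d' a := min_le_left _ _
    set d₂ := Function.update (Function.update d' a (d' a + τ)) m (d' m - τ) with hd₂
    have hd₂a : d₂ a = d' a + τ := by
      rw [hd₂, Function.update_of_ne (Ne.symm hma), Function.update_self]
    have hd₂m : d₂ m = d' m - τ := by rw [hd₂, Function.update_self]
    have hd₂o : ∀ x, x ≠ a → x ≠ m → d₂ x = d' x := by
      intro x hxa hxm
      rw [hd₂, Function.update_of_ne hxm, Function.update_of_ne hxa]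
    have hS₂ : ∀ k j : ℕ, S t d₂ k j = S t d' k j
        + (if k ≤ a ∧ a < j then τ else 0) - (if k ≤ m ∧ m < j then τ else 0) := by
      intro k j
      by_cases h1 : k ≤ m ∧ m < j
      · rw [hd₂, S_update_mem t _ _ h1.1 h1.2, Function.update_of_ne hma]
        by_cases h2 : k ≤ a ∧ a < j
        · rw [S_update_mem t d' _ h2.1 h2.2, if_pos h1, if_pos h2]; ring
        · rw [S_update_not_mem t d' _ h2, if_pos h1, if_neg h2]; ring
      · rw [hd₂, S_update_not_mem t _ _ h1]
        by_cases h2 : k ≤ a ∧ a < j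
        · rw [S_update_mem t d' _ h2.1 h2.2, if_neg h1, if_pos h2]; ring
        · rw [S_update_not_mem t d' _ h2, if_neg h1, if_neg h2]; ring
    have hfeas₂ : feasD l T t dmax smin smax d₂ := by
      constructor
      · intro i hi
        rcases eq_or_ne i m with rfl | him
        · rw [hd₂m]
          have := (hfeas.1 i hi).2
          constructor
          · linarith
          · linarith [hτpos]
        · rcases eq_or_ne i a with rfl | hia
          · rw [hd₂a]
            have := (hfeas.1 i hi).1
            constructor
            · linarith [hτpos]
            · linarith
          · rw [hd₂o i hia him]; exact hfeas.1 i hi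
      · intro k j hk hkj hjl
        rw [hS₂ k j]
        have hfe := hfeas.2 k j hk hkj hjl
        by_cases h2 : k ≤ a ∧ a < j
        · rw [if_pos h2]
          by_cases h1 : k ≤ m ∧ m < j
          · rw [if_pos h1]; linarith
          · rw [if_neg h1]
            have hkjR : (k, j) ∈ Rset l a := Rset_mem.mpr ⟨h2.1, by omega, hjl⟩
            have hGle : τi ≤ G (k, j) := Finset.inf'_le G hkjR
            rw [hG] at hGle
            simp only [if_neg h1] at hGle
            rw [hF] at hGle
            simp only at hGle
            have : τ ≤ τi := min_le_right _ _
            linarith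
        · rw [if_neg h2]
          by_cases h1 : k ≤ m ∧ m < j
          · rw [if_pos h1]; linarith [hτpos]
          · rw [if_neg h1]; linarith
    have hprof : ∑ i ∈ Finset.range l, p i * d' i
        ≤ ∑ i ∈ Finset.range l, p i * d₂ i := by
      have e1 := sum_mul_update p d' (l := l) (d' a + τ) ha
      have e2 := sum_mul_update p (Function.update d' a (d' a + τ)) (l := l)
        (d' m - τ) hml
      rw [Function.update_of_ne hma] at e2
      rw [hd₂, e2, e1]
      have hkey : p a * (d' a + τ - d' a) + p m * (d' m - τ - d' m)
          = (p a - p m) * τ := by ring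
      have hkey2 : 0 ≤ (p a - p m) * τ :=
        mul_nonneg (by linarith) hτpos.le
      linarith
    have hagree₂ : ∀ x < l, x ≠ a → ¬ P x → d₂ x = g x := by
      intro x hx hxa hPx
      have hxm : x ≠ m := fun h => hPx (h ▸ hPm)
      rw [hd₂o x hxa hxm]
      exact hagree x hx hxa hPx
    by_cases hfin : δ - d' a ≤ τi
    · have hτval : τ = δ - d' a := min_eq_left hfin
      refine ⟨d₂, hfeas₂, ?_, hagree₂, hprof⟩
      rw [hd₂a, hτval]; ring
    · have hτval : τ = τi := min_eq_right (le_of_not_ge hfin)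
      obtain ⟨q0, hq0R, hq0e⟩ := Finset.exists_mem_eq_inf' hRne G
      obtain ⟨hq0a, hq0j, hq0l⟩ := Rset_mem.mp hq0R
      have key : Nmeas l T t smin smax P a d₂ < Nmeas l T t smin smax P a d' := by
        by_cases hq0m : q0.1 ≤ m ∧ m < q0.2
        · -- τ = d' m : support shrinks
          have hτdm : τ = d' m := by
            rw [hτval, hτidef, hq0e, hG]
            simp only [if_pos hq0m]
          have hsupp : suppCnt l P d₂ < suppCnt l P d' := by
            refine suppCnt_lt l P d' d₂ ?_ m hml hPm (ne_of_gt hdm)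
              (by rw [hd₂m, hτdm]; ring)
            intro x hx hPx hne
            rcases eq_or_ne x m with rfl | hxm
            · exact ne_of_gt hdm
            · rwa [hd₂o x (hP x hPx).2.1 hxm] at hne
          have hsl2 := slackCnt_le l T t smin smax a d₂ ha
          calc Nmeas l T t smin smax P a d₂
              = suppCnt l P d₂ * (l * l + 1) + slackCnt l T t smin smax a d₂ := rfl
            _ < (suppCnt l P d₂ + 1) * (l * l + 1) := by
                rw [add_mul, one_mul]
                exact Nat.add_lt_add_left (by omega) _
            _ ≤ suppCnt l P d' * (l * l + 1) := Nat.mul_le_mul_right _ hsupp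
            _ ≤ Nmeas l T t smin smax P a d' := Nat.le_add_right _ _
        · -- a new tight interval appears
          have hGq0 : G q0 = F q0 := by rw [hG]; exact if_neg hq0m
          have hFτ : F q0 = τ := by rw [hτval, hτidef, hq0e, hGq0]
          have hsupp : suppCnt l P d₂ ≤ suppCnt l P d' := by
            refine suppCnt_le' l P d' d₂ ?_
            intro x hx hPx hne
            rcases eq_or_ne x m with rfl | hxm
            · exact ne_of_gt hdm
            · rwa [hd₂o x (hP x hPx).2.1 hxm] at hne
          have hslack : slackCnt l T t smin smax a d₂
              < slackCnt l T t smin smax a d' := by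
            refine slackCnt_lt l T t smin smax a d' d₂ ?_ q0 hq0R ?_ ?_
            · intro kj hkj hlt'
              obtain ⟨h1, h2, h3⟩ := Rset_mem.mp hkj
              rw [hS₂, if_pos ⟨h1, by omega⟩] at hlt'
              by_cases hm' : kj.1 ≤ m ∧ m < kj.2
              · rw [if_pos hm'] at hlt'; linarith
              · rw [if_neg hm'] at hlt'; linarith
            · rw [hF] at hFτ
              simp only at hFτ
              linarith
            · rw [hS₂, if_pos ⟨hq0a, by omega⟩, if_neg hq0m]
              rw [hF] at hFτ
              simp only at hFτ
              push_neg
              linarith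
          calc Nmeas l T t smin smax P a d₂
              = suppCnt l P d₂ * (l * l + 1) + slackCnt l T t smin smax a d₂ := rfl
            _ ≤ suppCnt l P d' * (l * l + 1) + slackCnt l T t smin smax a d₂ :=
                Nat.add_le_add_right (Nat.mul_le_mul_right _ hsupp) _
            _ < Nmeas l T t smin smax P a d' := Nat.add_lt_add_left hslack _
      obtain ⟨d'', h1, h2, h3, h4⟩ := ih (Nmeas l T t smin smax P a d₂)
        (lt_of_lt_of_le key hN) d₂ le_rfl hfeas₂ hagree₂
      exact ⟨d'', h1, h2, h3, le_trans hprof h4⟩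
  · -- ===== no tight interval =====
    push_neg at htight
    set σi := (Rset l a).inf' hRne F with hσidef
    have hσipos : 0 < σi := by
      refine (Finset.lt_inf'_iff hRne).mpr fun kj hkj => ?_
      have := htight kj hkj
      rw [hF]; simp only; linarith
    by_cases hsmall : δ - d' a ≤ σi
    · -- reach δ in one step
      set d₁ := Function.update d' a δ with hd₁
      have hfeas₁ : feasD l T t dmax smin smax d₁ := by
        constructor
        · intro i hi
          rcases eq_or_ne i a with rfl | hia
          · rw [hd₁, Function.update_self]; exact ⟨hδ0, hδdmax⟩
          · rw [hd₁, Function.update_of_ne hia]; exact hfeas.1 i hi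
        · intro k j hk hkj hjl
          have hfe := hfeas.2 k j hk hkj hjl
          by_cases h2 : k ≤ a ∧ a < j
          · rw [hd₁, S_update_mem t d' δ h2.1 h2.2]
            have hkjR : (k, j) ∈ Rset l a := Rset_mem.mpr ⟨h2.1, by omega, hjl⟩
            have := Finset.inf'_le F hkjR
            rw [← hσidef, hF] at this
            simp only at this
            linarith
          · rw [hd₁, S_update_not_mem t d' δ h2]; exact hfe
      refine ⟨d₁, hfeas₁, by rw [hd₁, Function.update_self], ?_, ?_⟩
      · intro x hx hxa hPx
        rw [hd₁, Function.update_of_ne hxa]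
        exact hagree x hx hxa hPx
      · rw [hd₁, sum_mul_update p d' δ ha]
        have : 0 ≤ p a * (δ - d' a) := mul_nonneg (hp a ha) (by linarith)
        linarith
    · -- push to the nearest tight interval and recurse
      push_neg at hsmall
      set d₁ := Function.update d' a (d' a + σi) with hd₁
      have hfeas₁ : feasD l T t dmax smin smax d₁ := by
        constructor
        · intro i hi
          rcases eq_or_ne i a with rfl | hia
          · rw [hd₁, Function.update_self]
            have := (hfeas.1 i hi).1
            constructor
            · linarith
            · linarith
          · rw [hd₁, Function.update_of_ne hia]; exact hfeas.1 i hi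
        · intro k j hk hkj hjl
          have hfe := hfeas.2 k j hk hkj hjl
          by_cases h2 : k ≤ a ∧ a < j
          · rw [hd₁, S_update_mem t d' _ h2.1 h2.2]
            have hkjR : (k, j) ∈ Rset l a := Rset_mem.mpr ⟨h2.1, by omega, hjl⟩
            have := Finset.inf'_le F hkjR
            rw [← hσidef, hF] at this
            simp only at this
            linarith
          · rw [hd₁, S_update_not_mem t d' _ h2]; exact hfe
      have hagree₁ : ∀ x < l, x ≠ a → ¬ P x → d₁ x = g x := by
        intro x hx hxa hPx
        rw [hd₁, Function.update_of_ne hxa]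
        exact hagree x hx hxa hPx
      have hprof : ∑ i ∈ Finset.range l, p i * d' i
          ≤ ∑ i ∈ Finset.range l, p i * d₁ i := by
        rw [hd₁, sum_mul_update p d' _ ha]
        have : 0 ≤ p a * (d' a + σi - d' a) := by
          have := hp a ha
          nlinarith
        linarith
      have hS₁ : ∀ k j : ℕ, k ≤ a → a < j →
          S t d₁ k j = S t d' k j + σi := by
        intro k j h1 h2
        rw [hd₁, S_update_mem t d' _ h1 h2]; ring
      have hsupp : suppCnt l P d₁ = suppCnt l P d' := by
        have h1 : suppCnt l P d₁ ≤ suppCnt l P d' := by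
          refine suppCnt_le' l P d' d₁ ?_
          intro x hx hPx hne
          rwa [hd₁, Function.update_of_ne (hP x hPx).2.1] at hne
        have h2 : suppCnt l P d' ≤ suppCnt l P d₁ := by
          refine suppCnt_le' l P d₁ d' ?_
          intro x hx hPx hne
          rw [hd₁, Function.update_of_ne (hP x hPx).2.1]
          exact hne
        omega
      obtain ⟨q0, hq0R, hq0e⟩ := Finset.exists_mem_eq_inf' hRne F
      obtain ⟨hq0a, hq0j, hq0l⟩ := Rset_mem.mp hq0R
      have hslack : slackCnt l T t smin smax a d₁
          < slackCnt l T t smin smax a d' := by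
        refine slackCnt_lt l T t smin smax a d' d₁ ?_ q0 hq0R ?_ ?_
        · intro kj hkj hlt'
          obtain ⟨h1, h2, h3⟩ := Rset_mem.mp hkj
          rw [hS₁ kj.1 kj.2 h1 (by omega)] at hlt'
          linarith
        · have := htight q0 hq0R
          linarith
        · rw [hS₁ q0.1 q0.2 hq0a (by omega)]
          have hFq0 : F q0 = σi := by rw [hσidef, hq0e]
          rw [hF] at hFq0
          simp only at hFq0
          push_neg
          linarith
      have key : Nmeas l T t smin smax P a d₁ < Nmeas l T t smin smax P a d' := by
        unfold Nmeas
        rw [hsupp]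
        exact Nat.add_lt_add_left hslack _
      obtain ⟨d'', h1, h2, h3, h4⟩ := ih (Nmeas l T t smin smax P a d₁)
        (lt_of_lt_of_le key hN) d₁ le_rfl hfeas₁ hagree₁
      exact ⟨d'', h1, h2, h3, le_trans hprof h4⟩

end STO
namespace STO

theorem fold_opt (l : ℕ) (T : ℝ) (p t dmax smin smax : ℕ → ℝ)
    (hp : ∀ i < l, 0 ≤ p i) (hdmax : ∀ i < l, 0 ≤ dmax i) :
    ∀ (L : List ℕ) (g : ℕ → ℝ),
      feasD l T t dmax smin smax g →
      (∀ m ∈ L, g m = 0) →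
      L.Nodup → (∀ m ∈ L, m < l) →
      L.Pairwise (fun i j => p j ≤ p i) →
      feasD l T t dmax smin smax (L.foldl (stoStep l T t dmax smin smax) g) ∧
      (∀ m < l, m ∉ L → (L.foldl (stoStep l T t dmax smin smax) g) m = g m) ∧
      ∀ d', feasD l T t dmax smin smax d' →
        (∀ m < l, m ∉ L → d' m = g m) →
        ∃ d'', feasD l T t dmax smin smax d'' ∧
          (∀ m < l, d'' m = (L.foldl (stoStep l T t dmax smin smax) g) m) ∧
          ∑ i ∈ Finset.range l, p i * d' i ≤ ∑ i ∈ Finset.range l, p i * d'' i := by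
  intro L
  induction L with
  | nil =>
    intro g hg _ _ _ _
    refine ⟨hg, fun m hm _ => rfl, fun d' hd' hag => ⟨g, hg, fun m _ => rfl, ?_⟩⟩
    exact le_of_eq (Finset.sum_congr rfl fun i hi => by
      rw [hag i (Finset.mem_range.mp hi) (by simp)])
  | cons a L' ihL =>
    intro g hg hg0 hnd hmem hsort
    have ha : a < l := hmem a (List.mem_cons_self)
    have hga : g a = 0 := hg0 a (List.mem_cons_self)
    have hnd' := List.nodup_cons.mp hnd
    have hsort' := List.pairwise_cons.mp hsort
    obtain ⟨hδ0, hupd⟩ := step_feasD l T t dmax smin smax g a ha hg hga hdmax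
    set δ := delta l T t dmax smin smax g a ha with hδdef
    have hstep : stoStep l T t dmax smin smax g a = Function.update g a δ :=
      stoStep_eq l T t dmax smin smax g a ha
    have hfold : (a :: L').foldl (stoStep l T t dmax smin smax) g
        = L'.foldl (stoStep l T t dmax smin smax) (Function.update g a δ) := by
      rw [List.foldl_cons, hstep]
    have hg10 : ∀ m ∈ L', Function.update g a δ m = 0 := by
      intro m hm
      have hma : m ≠ a := fun h => hnd'.1 (h ▸ hm)
      rw [Function.update_of_ne hma]
      exact hg0 m (List.mem_cons_of_mem a hm)
    obtain ⟨ihf, ihag, ihopt⟩ := ihL (Function.update g a δ) hupd hg10 hnd'.2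
      (fun m hm => hmem m (List.mem_cons_of_mem a hm)) hsort'.2
    rw [hfold]
    refine ⟨ihf, ?_, ?_⟩
    · intro m hm hmL
      have hma : m ≠ a := fun h => hmL (h ▸ List.mem_cons_self)
      have hmL' : m ∉ L' := fun h => hmL (List.mem_cons_of_mem a h)
      rw [ihag m hm hmL', Function.update_of_ne hma]
    · intro d' hd' hag
      have hP : ∀ m, m ∈ L' → m < l ∧ m ≠ a ∧ g m = 0 ∧ p m ≤ p a := by
        intro m hm
        exact ⟨hmem m (List.mem_cons_of_mem a hm), fun h => hnd'.1 (h ▸ hm),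
          hg0 m (List.mem_cons_of_mem a hm), hsort'.1 m hm⟩
      obtain ⟨d₂, hd₂f, hd₂a, hd₂ag, hd₂prof⟩ :=
        exchange l T p t dmax smin smax hp hdmax a ha g hg hga (· ∈ L') hP
          (Nmeas l T t smin smax (· ∈ L') a d') d' le_rfl hd'
          (fun m hm hma hmL' => hag m hm (by
            intro hc
            rcases List.mem_cons.mp hc with h | h
            · exact hma h
            · exact hmL' h))
      obtain ⟨d'', h1, h2, h3⟩ := ihopt d₂ hd₂f (fun m hm hmL' => by
        rcases eq_or_ne m a with rfl | hma
        · rw [hd₂a, Function.update_self]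
        · rw [hd₂ag m hm hma hmL', Function.update_of_ne hma])
      exact ⟨d'', h1, h2, le_trans hd₂prof h3⟩

end STO

/-- Theorem 4.1: the pair `(s*, d*)` returned by Algorithm STO (processing the indices in
non-increasing order of profit) is feasible for the service-time LP and is optimal. -/
theorem sto_optimal
    (l : ℕ) (hl : 1 ≤ l) (T : ℝ) (p t dmax smin smax : ℕ → ℝ)
    (hp : ∀ i < l, 0 ≤ p i)
    (hdmax : ∀ i < l, 0 ≤ dmax i)
    (hwin : ∀ i < l, sHat t smin (fun _ => 0) i ≤ smax i)
    (hT : sHat t smin (fun _ => 0) (l - 1) + t (l - 1) ≤ T)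
    (order : List ℕ) (hperm : order.Perm (List.range l))
    (hsorted : order.Pairwise fun i j => p j ≤ p i)
    (dstar : ℕ → ℝ) (hdstar : dstar = stoD l T t dmax smin smax order)
    (sstar : ℕ → ℝ) (hsstar : sstar = sHat t smin dstar) :
    Feasible l T t dmax smin smax sstar dstar ∧
      ∀ s d : ℕ → ℝ, Feasible l T t dmax smin smax s d →
        ∑ i ∈ Finset.range l, p i * d i ≤ ∑ i ∈ Finset.range l, p i * dstar i := by
  have hzero : STO.feasD l T t dmax smin smax (fun _ => 0) :=
    STO.zero_feasD l hl T t dmax smin smax hdmax hwin hT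
  have hnd : order.Nodup := hperm.nodup_iff.mpr (List.nodup_range)
  have hmem : ∀ m ∈ order, m < l := fun m hm =>
    List.mem_range.mp (hperm.mem_iff.mp hm)
  obtain ⟨hfeasf, _, hopt⟩ := STO.fold_opt l T p t dmax smin smax hp hdmax order
    (fun _ => 0) hzero (fun m _ => rfl) hnd hmem hsorted
  have hdstar' : dstar = order.foldl (stoStep l T t dmax smin smax) (fun _ => 0) := hdstar
  constructor
  · rw [hsstar, hdstar']
    exact STO.feasD_to_feas l T t dmax smin smax _ (hdstar' ▸ hfeasf)
  · intro s d hfd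
    have hfD : STO.feasD l T t dmax smin smax d :=
      STO.feas_to_feasD l T t dmax smin smax s d hfd
    obtain ⟨d'', h1, h2, h3⟩ := hopt d hfD (fun m hm hmord => by
      exact absurd (hperm.mem_iff.mpr (List.mem_range.mpr hm)) hmord)
    refine le_trans h3 (le_of_eq ?_)
    refine Finset.sum_congr rfl fun i hi => ?_
    rw [h2 i (Finset.mem_range.mp hi), hdstar']
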